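/- Let m be a positive integer and let x be a real number with 0 < x < π. Then ∑_{n=1}^∞ (-1)^{n-1} sin(nx)/n^{2m} = ((-1)^m π^{2m-1}/(2m-1)!) · ( 2^{2m-1} ζ'(1-2m, 1 - x/(2π)) − 2^{2m-1} ζ'(1-2m, x/(2π)) − ζ'(1-2m, 1 - x/π) + ζ'(1-2m, x/π) ). -/

import Mathlib

open Filter Topology Finset Real

/-- The Hurwitz zeta function `ζ(s, a)` for a real parameter `a > 0`: the meromorphic
continuation in `s` of the series `∑ k : ℕ, (k + a) ^ (-s)` (convergent for `Re s > 1`).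
For `0 < a ≤ 1` it is Mathlib's `HurwitzZeta.hurwitzZeta`; for larger `a` it is obtained
through the recurrence `ζ(s, a) = ζ(s, a + 1) + a ^ (-s)`. -/
noncomputable def hzeta (s : ℂ) (a : ℝ) : ℂ :=
  HurwitzZeta.hurwitzZeta (a : UnitAddCircle) s -
    ∑ j ∈ Finset.range (⌈a⌉₊ - 1), ((a : ℂ) - ((⌈a⌉₊ : ℂ) - 1) + j) ^ (-s)

namespace AltSinAux

open HurwitzZeta

lemma cos_nat_pi (m : ℕ) : Complex.cos (m * (π:ℂ)) = (-1)^m := by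
  induction m with
  | zero => simp
  | succ n ih => push_cast; rw [add_mul, one_mul, Complex.cos_add_pi, ih]; ring

lemma deriv_hzOdd (a : UnitAddCircle) (m : ℕ) (hm : 0 < m) :
    deriv (hurwitzZetaOdd a) (1 - 2 * (m:ℂ)) =
      -((-1) ^ m * (π : ℂ) * (Nat.factorial (2 * m - 1)) * ((2 * (π:ℂ)) ^ (2 * m))⁻¹ *
        sinZeta a (2 * (m:ℂ))) := by
  have h2pi : (2 * (π:ℂ)) ≠ 0 := by
    simp [Real.pi_ne_zero, Complex.ofReal_ne_zero]
  set X : ℂ := 2 * (m:ℂ) with hX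
  have hXre : 0 < X.re := by
    simp only [hX, Complex.mul_re, Complex.ofReal_re]
    simp
    positivity
  have hXnat : X = ((2*m : ℕ) : ℂ) := by push_cast [hX]; ring
  -- step A: chain rule
  have hinner : HasDerivAt (fun s : ℂ => 1 - s) (-1) X := by
    simpa using (hasDerivAt_id X).const_sub 1
  have hcomp : HasDerivAt (fun s : ℂ => hurwitzZetaOdd a (1 - s))
      (deriv (hurwitzZetaOdd a) (1 - X) * (-1)) X :=
    ((differentiable_hurwitzZetaOdd a (1 - X)).hasDerivAt).comp X hinner
  have hA : deriv (fun s : ℂ => hurwitzZetaOdd a (1 - s)) X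
      = -deriv (hurwitzZetaOdd a) (1 - X) := by
    rw [hcomp.deriv]; ring
  -- step B: eventual equality with the functional-equation RHS
  have heq : (fun s : ℂ => hurwitzZetaOdd a (1 - s)) =ᶠ[nhds X]
      (fun s : ℂ => (2 * (2 * (π:ℂ)) ^ (-s) * Complex.Gamma s * sinZeta a s)
        * Complex.sin ((π:ℂ) * s / 2)) := by
    filter_upwards [(isOpen_lt continuous_const Complex.continuous_re).mem_nhds hXre]
      with s hs
    have hsne : ∀ n : ℕ, s ≠ -n := by
      intro n h
      rw [h] at hs
      simp only [Set.mem_setOf_eq, Complex.neg_re, Complex.natCast_re] at hs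
      have : (0:ℝ) ≤ n := n.cast_nonneg
      linarith
    rw [hurwitzZetaOdd_one_sub a hsne]; ring
  -- step C: compute the derivative of the RHS
  have hF : DifferentiableAt ℂ
      (fun s : ℂ => 2 * (2 * (π:ℂ)) ^ (-s) * Complex.Gamma s * sinZeta a s) X := by
    have h1 : DifferentiableAt ℂ (fun s : ℂ => (2 * (π:ℂ)) ^ (-s)) X :=
      (differentiableAt_id.neg).const_cpow (Or.inl h2pi)
    have h2 : DifferentiableAt ℂ Complex.Gamma X := by
      refine Complex.differentiableAt_Gamma _ (fun n => ?_)
      intro h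
      rw [h] at hXre
      simp only [Complex.neg_re, Complex.natCast_re] at hXre
      have : (0:ℝ) ≤ n := n.cast_nonneg
      linarith
    exact (((differentiableAt_const 2).mul h1).mul h2).mul (differentiableAt_sinZeta a X)
  have hGinner : HasDerivAt (fun s : ℂ => (π:ℂ) * s / 2) ((π:ℂ)/2) X := by
    simpa using ((hasDerivAt_id X).const_mul (π:ℂ)).div_const 2
  have hG : HasDerivAt (fun s : ℂ => Complex.sin ((π:ℂ) * s / 2))
      (Complex.cos ((π:ℂ) * X / 2) * ((π:ℂ)/2)) X :=
    (Complex.hasDerivAt_sin _).comp X hGinner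
  have hprod := (hF.hasDerivAt.mul hG).deriv
  have hsinX : Complex.sin ((π:ℂ) * X / 2) = 0 := by
    rw [show (π:ℂ) * X / 2 = (m:ℂ) * π by rw [hX]; ring]
    exact_mod_cast Complex.sin_nat_mul_pi m
  have hcosX : Complex.cos ((π:ℂ) * X / 2) = (-1)^m := by
    rw [show (π:ℂ) * X / 2 = (m:ℂ) * π by rw [hX]; ring]
    exact cos_nat_pi m
  have hGamX : Complex.Gamma X = (Nat.factorial (2*m-1) : ℂ) := by
    have h1 : ((2*m-1 : ℕ) : ℂ) + 1 = X := by
      push_cast [Nat.cast_sub (by omega : 1 ≤ 2*m), hX]; ring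
    rw [← h1, Complex.Gamma_nat_eq_factorial]
  have hcpow : (2 * (π:ℂ)) ^ (-X) = ((2 * (π:ℂ)) ^ (2*m))⁻¹ := by
    rw [hXnat, ← Complex.cpow_natCast, ← Complex.cpow_neg]
  calc deriv (hurwitzZetaOdd a) (1 - X)
      = -deriv (fun s : ℂ => hurwitzZetaOdd a (1 - s)) X := by rw [hA]; ring
    _ = -deriv (fun s : ℂ => (2 * (2 * (π:ℂ)) ^ (-s) * Complex.Gamma s * sinZeta a s)
        * Complex.sin ((π:ℂ) * s / 2)) X := by rw [heq.deriv_eq]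
    _ = _ := by
        rw [show (fun s : ℂ => (2 * (2 * (π:ℂ)) ^ (-s) * Complex.Gamma s * sinZeta a s) * Complex.sin ((π:ℂ) * s / 2)) = (fun s : ℂ => 2 * (2 * (π:ℂ)) ^ (-s) * Complex.Gamma s * sinZeta a s) * (fun s : ℂ => Complex.sin ((π:ℂ) * s / 2)) from rfl,
          hprod, hsinX, hcosX, hGamX, hcpow]
        ring

lemma hzeta_eq (b : ℝ) (hb : 0 < b) (hb' : b ≤ 1) :
    (fun s => hzeta s b) = hurwitzZeta (b : UnitAddCircle) := by
  funext s
  rw [hzeta, Nat.le_antisymm (Nat.ceil_le.mpr (by exact_mod_cast hb')) (Nat.ceil_pos.mpr hb)]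
  simp

lemma deriv_diff_eq (a : ℝ) (h0 : 0 < a) (h1 : a < 1) (m : ℕ) (hm : 0 < m) :
    deriv (fun s => hzeta s (1-a)) (1 - 2*(m:ℂ)) - deriv (fun s => hzeta s a) (1 - 2*(m:ℂ))
      = 2 * (-1)^m * (π:ℂ) * (Nat.factorial (2*m-1)) * ((2*(π:ℂ))^(2*m))⁻¹ *
        sinZeta (a : UnitAddCircle) (2*(m:ℂ)) := by
  rw [hzeta_eq (1-a) (by linarith) (by linarith), hzeta_eq a h0 h1.le]
  have hne : (1 - 2*(m:ℂ)) ≠ 1 := by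
    intro h
    have : (2*(m:ℂ)) = 0 := by linear_combination -h
    simp at this
    omega
  have hda := differentiableAt_hurwitzZeta (a : UnitAddCircle) hne
  have hdo := differentiable_hurwitzZetaOdd (a : UnitAddCircle) (1 - 2*(m:ℂ))
  have key : hurwitzZeta ((1-a : ℝ) : UnitAddCircle)
      = fun s => hurwitzZeta (a : UnitAddCircle) s - 2 * hurwitzZetaOdd (a : UnitAddCircle) s := by
    funext s
    have h2 := hurwitzZetaOdd_eq (a : UnitAddCircle) s
    have h3 : ((1 - a : ℝ) : UnitAddCircle) = -((a:ℝ) : UnitAddCircle) := by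
      simp [sub_eq_add_neg]
    rw [h3]
    linear_combination 2 * h2
  rw [key, deriv_fun_sub hda ((hdo.const_mul 2)), deriv_const_mul 2 hdo,
    deriv_hzOdd (a : UnitAddCircle) m hm]
  ring

lemma hasSum_key (x : ℝ) (m : ℕ) (hm : 0 < m) :
    HasSum (fun n : ℕ => (-1)^n * (Real.sin ((n+1)*x) : ℂ) / ((n:ℂ)+1)^(2*m))
      (sinZeta ((x/(2*π) : ℝ) : UnitAddCircle) (2*(m:ℂ))
        - 2 * (((2:ℂ)^(2*m))⁻¹ * sinZeta ((x/π : ℝ) : UnitAddCircle) (2*(m:ℂ)))) := by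
  have hXnat : (2*(m:ℂ)) = ((2*m : ℕ) : ℂ) := by push_cast; ring
  have hre : 1 < (2*(m:ℂ)).re := by
    rw [hXnat, Complex.natCast_re]
    exact_mod_cast (by omega : 1 < 2*m)
  have hπ := Real.pi_ne_zero
  -- first series
  have hg : HasSum (fun n : ℕ => (Real.sin (x*n) : ℂ) / ((n:ℂ))^(2*m))
      (sinZeta ((x/(2*π) : ℝ) : UnitAddCircle) (2*(m:ℂ))) := by
    refine (hasSum_nat_sinZeta (x/(2*π)) hre).congr_fun fun n => ?_
    rw [show 2*π*(x/(2*π))*(n:ℝ) = x*n by field_simp, hXnat, Complex.cpow_natCast]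
  -- second series
  have hh : HasSum (fun n : ℕ => (Real.sin (2*x*n) : ℂ) / ((n:ℂ))^(2*m))
      (sinZeta ((x/π : ℝ) : UnitAddCircle) (2*(m:ℂ))) := by
    refine (hasSum_nat_sinZeta (x/π) hre).congr_fun fun n => ?_
    rw [show 2*π*(x/π)*(n:ℝ) = 2*x*n by field_simp, hXnat, Complex.cpow_natCast]
  -- even-indexed subsum
  have he : HasSum (fun k : ℕ => (Real.sin (x*((2*k : ℕ):ℝ)) : ℂ) / (((2*k : ℕ):ℂ))^(2*m))
      (((2:ℂ)^(2*m))⁻¹ * sinZeta ((x/π : ℝ) : UnitAddCircle) (2*(m:ℂ))) := by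
    refine (hh.mul_left (((2:ℂ)^(2*m))⁻¹)).congr_fun fun k => ?_
    have harg : x*((2*k : ℕ):ℝ) = 2*x*k := by push_cast; ring
    have hden : (((2*k : ℕ):ℂ))^(2*m) = 2^(2*m) * (k:ℂ)^(2*m) := by
      push_cast; rw [mul_pow]
    rw [harg, hden]
    rcases Nat.eq_zero_or_pos k with rfl | hk
    · simp
    · have hk' : ((k:ℂ)) ≠ 0 := by exact_mod_cast hk.ne'
      field_simp
  -- indicator version
  have hind : HasSum (fun n : ℕ => if Even n then (Real.sin (x*n) : ℂ) / ((n:ℂ))^(2*m) else 0)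
      (((2:ℂ)^(2*m))⁻¹ * sinZeta ((x/π : ℝ) : UnitAddCircle) (2*(m:ℂ))) := by
    have hinj : Function.Injective (fun k : ℕ => 2*k) := fun a b h => by dsimp at h; omega
    rw [← Function.Injective.hasSum_iff hinj ?_]
    · refine he.congr_fun fun k => ?_
      simp [even_two_mul]
    · intro n hn
      have hne : ¬ Even n := by
        rintro ⟨r, rfl⟩
        exact hn ⟨r, by dsimp; omega⟩
      simp [hne]
  -- combine
  have ht : HasSum (fun n : ℕ => (Real.sin (x*n) : ℂ) / ((n:ℂ))^(2*m)
        - 2 * (if Even n then (Real.sin (x*n) : ℂ) / ((n:ℂ))^(2*m) else 0))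
      (sinZeta ((x/(2*π) : ℝ) : UnitAddCircle) (2*(m:ℂ))
        - 2 * (((2:ℂ)^(2*m))⁻¹ * sinZeta ((x/π : ℝ) : UnitAddCircle) (2*(m:ℂ)))) :=
    hg.sub (hind.mul_left 2)
  -- shift by one
  have hshift := (hasSum_nat_add_iff' (f := fun n : ℕ => (Real.sin (x*n) : ℂ) / ((n:ℂ))^(2*m)
        - 2 * (if Even n then (Real.sin (x*n) : ℂ) / ((n:ℂ))^(2*m) else 0)) 1).mpr ht
  rw [Finset.sum_range_one] at hshift
  rw [show (↑(Real.sin (x * ((0:ℕ):ℝ))) / ((0:ℕ):ℂ) ^ (2*m)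
      - 2 * if Even (0:ℕ) then ↑(Real.sin (x * ((0:ℕ):ℝ))) / ((0:ℕ):ℂ) ^ (2*m) else 0 : ℂ) = 0
    from by simp, sub_zero] at hshift
  refine hshift.congr_fun fun n => ?_
  rcases Nat.even_or_odd n with hev | hod
  · have h1 : ¬ Even (n+1) := by simp [Nat.even_add_one, hev]
    rw [if_neg h1, hev.neg_one_pow]
    rw [show x*((n+1 : ℕ):ℝ) = ((n:ℝ)+1)*x by push_cast; ring]
    push_cast
    ring
  · have h1 : Even (n+1) := by simp [Nat.even_add_one, Nat.not_even_iff_odd.mpr hod]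
    rw [if_pos h1, hod.neg_one_pow]
    rw [show x*((n+1 : ℕ):ℝ) = ((n:ℝ)+1)*x by push_cast; ring]
    push_cast
    ring

lemma alg (P F S1 S2 Z2 Z4 ε : ℂ) (hP : P ≠ 0) (hF : F ≠ 0) (hε : ε * ε = 1) (n : ℕ) :
    ε * P^(2*n+1) / F *
      (2^(2*n+1) * (Z2 + 2*ε*P*F*((2*P)^(2*n+1+1))⁻¹*S1) - 2^(2*n+1)*Z2
        - (Z4 + 2*ε*P*F*((2*P)^(2*n+1+1))⁻¹*S2) + Z4)
      = S1 - 2*((2^(2*n+1+1))⁻¹ * S2) := by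
  have h2P : (2*P) ≠ 0 := by simp [hP]
  field_simp
  linear_combination (P^2*P^(n*2)*F*S1*2^(n*4)*16 - P^2*P^(n*2)*F*S2*2^(n*2)*8) * hε

end AltSinAux

/-- For a positive integer `m` and `0 < x < π`,
`∑_{n=1}^∞ (-1)^(n-1) sin(nx)/n^(2m) = ((-1)^m π^(2m-1)/(2m-1)!) ·
  (2^(2m-1) ζ'(1-2m, 1 - x/(2π)) - 2^(2m-1) ζ'(1-2m, x/(2π))
   - ζ'(1-2m, 1 - x/π) + ζ'(1-2m, x/π))`. -/
theorem alt_sin_series_even_exponent_closed_form (m : ℕ) (hm : 0 < m)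
    (x : ℝ) (hx0 : 0 < x) (hx1 : x < π) :
    Filter.Tendsto
      (fun N : ℕ => ∑ n ∈ Finset.range N,
        (-1) ^ n * (Real.sin ((n + 1) * x) : ℂ) / ((n : ℂ) + 1) ^ (2 * m))
      Filter.atTop
      (𝓝 ((-1) ^ m * (π : ℂ) ^ (2 * m - 1) / (Nat.factorial (2 * m - 1) : ℂ) *
        (2 ^ (2 * m - 1) * deriv (fun s => hzeta s (1 - x / (2 * π))) (1 - 2 * (m : ℂ)) -
          2 ^ (2 * m - 1) * deriv (fun s => hzeta s (x / (2 * π))) (1 - 2 * (m : ℂ)) -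
          deriv (fun s => hzeta s (1 - x / π)) (1 - 2 * (m : ℂ)) +
          deriv (fun s => hzeta s (x / π)) (1 - 2 * (m : ℂ))))) := by
  obtain ⟨k, rfl⟩ : ∃ k, m = k + 1 := ⟨m - 1, by omega⟩
  have hπ : (0:ℝ) < π := Real.pi_pos
  have hb0 : 0 < x/(2*π) := by positivity
  have hb1 : x/(2*π) < 1 := by
    rw [div_lt_one (by positivity)]; linarith
  have hc0 : 0 < x/π := by positivity
  have hc1 : x/π < 1 := by rw [div_lt_one hπ]; exact hx1
  have hs := AltSinAux.hasSum_key x (k+1) (by omega)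
  have hD1 := AltSinAux.deriv_diff_eq (x/(2*π)) hb0 hb1 (k+1) (by omega)
  have hD2 := AltSinAux.deriv_diff_eq (x/π) hc0 hc1 (k+1) (by omega)
  convert hs.tendsto_sum_nat using 2
  have harith1 : 2*(k+1) - 1 = 2*k+1 := by omega
  have harith2 : 2*(k+1) = (2*k+1)+1 := by omega
  rw [harith1, harith2] at hD1 hD2 ⊢
  have hπc : (π:ℂ) ≠ 0 := Complex.ofReal_ne_zero.mpr Real.pi_ne_zero
  have hfac : ((Nat.factorial (2*k+1) : ℂ)) ≠ 0 :=
    Nat.cast_ne_zero.mpr (Nat.factorial_ne_zero _)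
  have hε : ((-1:ℂ))^(k+1) * ((-1:ℂ))^(k+1) = 1 := by
    rw [← pow_add]
    exact Even.neg_one_pow ⟨k+1, rfl⟩
  have e1 : deriv (fun s => hzeta s (1 - x / (2*π))) (1 - 2*((k+1:ℕ):ℂ))
      = deriv (fun s => hzeta s (x / (2*π))) (1 - 2*((k+1:ℕ):ℂ))
        + 2*((-1:ℂ))^(k+1)*(π:ℂ)*((Nat.factorial (2*k+1) : ℂ))*((2*(π:ℂ))^(2*k+1+1))⁻¹
          * HurwitzZeta.sinZeta ((x/(2*π) : ℝ) : UnitAddCircle) (2*((k+1:ℕ):ℂ)) := by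
    linear_combination hD1
  have e3 : deriv (fun s => hzeta s (1 - x / π)) (1 - 2*((k+1:ℕ):ℂ))
      = deriv (fun s => hzeta s (x / π)) (1 - 2*((k+1:ℕ):ℂ))
        + 2*((-1:ℂ))^(k+1)*(π:ℂ)*((Nat.factorial (2*k+1) : ℂ))*((2*(π:ℂ))^(2*k+1+1))⁻¹
          * HurwitzZeta.sinZeta ((x/π : ℝ) : UnitAddCircle) (2*((k+1:ℕ):ℂ)) := by
    linear_combination hD2
  rw [e1, e3]
  exact AltSinAux.alg (π:ℂ) _ _ _ _ _ _ hπc hfac hε k
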